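/- Let (X, 𝒜) be a measurable space, A = {0,1} a binary sensitive attribute, and μ a probability measure on X × A giving positive mass to each group X × {a}. Let p, S : X × A → [0,1] be measurable, and for each a ∈ A let μ_a denote the restriction of μ to X × {a}; assume that for each a ∈ A the pushforward measures of p and of S under μ_a are atomless. Then the Affirmative Action assumption holds if and only if for each group a ∈ A, for (μ_a ⊗ μ_a)-almost every pair ((x,a),(x',a)) of individuals of group a, p(x,a) ≤ p(x',a) implies S(x,a) ≤ S(x',a). -/

import Mathlib

open MeasureTheory

open Set Filter Topology
open scoped ENNReal

lemma continuous_measure_Ioi (ν : Measure ℝ) [IsFiniteMeasure ν]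
    (hatom : ∀ c : ℝ, ν {c} = 0) : Continuous fun u => ν (Set.Ioi u) := by
  rw [continuous_iff_continuousAt]
  intro x
  rw [ContinuousAt, ENNReal.tendsto_nhds (measure_ne_top ν _)]
  intro ε hε
  have hanti : ∀ i j : ℕ, i ≤ j → (1:ℝ)/(j+1) ≤ 1/(i+1) := by
    intro i j hij
    apply one_div_le_one_div_of_le
    · positivity
    · have : (i:ℝ) ≤ (j:ℝ) := by exact_mod_cast hij
      linarith
  have hL : Tendsto (fun n : ℕ => ν (Set.Ioc (x - 1/(n+1)) x)) atTop (𝓝 0) := by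
    have hiInter : (⋂ n : ℕ, Set.Ioc (x - 1/(n+1)) x) = {x} := by
      ext y
      simp only [Set.mem_iInter, Set.mem_Ioc, Set.mem_singleton_iff]
      constructor
      · intro h
        have hyx : y ≤ x := (h 0).2
        by_contra hne
        have hlt : y < x := lt_of_le_of_ne hyx hne
        obtain ⟨n, hn⟩ := exists_nat_one_div_lt (sub_pos.2 hlt)
        have := (h n).1
        push_cast at this hn
        linarith
      · rintro rfl n
        have : (0:ℝ) < 1/(n+1) := by positivity
        exact ⟨by linarith, le_refl _⟩
    have h2 := tendsto_measure_iInter_atTop (μ := ν)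
      (s := fun n : ℕ => Set.Ioc (x - 1/(n+1)) x)
      (fun n => measurableSet_Ioc.nullMeasurableSet)
      (fun i j hij => Set.Ioc_subset_Ioc (by linarith [hanti i j hij]) le_rfl)
      ⟨0, measure_ne_top _ _⟩
    rw [hiInter, hatom x] at h2
    exact h2
  have hR : Tendsto (fun n : ℕ => ν (Set.Ioc x (x + 1/(n+1)))) atTop (𝓝 0) := by
    have hiInter : (⋂ n : ℕ, Set.Ioc x (x + 1/(n+1))) = (∅ : Set ℝ) := by
      refine Set.eq_empty_iff_forall_notMem.2 fun y hy => ?_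
      simp only [Set.mem_iInter, Set.mem_Ioc] at hy
      have h := hy
      obtain ⟨n, hn⟩ := exists_nat_one_div_lt (sub_pos.2 (h 0).1)
      have := (h n).2
      push_cast at this hn
      linarith
    have h2 := tendsto_measure_iInter_atTop (μ := ν)
      (s := fun n : ℕ => Set.Ioc x (x + 1/(n+1)))
      (fun n => measurableSet_Ioc.nullMeasurableSet)
      (fun i j hij => Set.Ioc_subset_Ioc le_rfl (by linarith [hanti i j hij]))
      ⟨0, measure_ne_top _ _⟩
    rw [hiInter, measure_empty] at h2
    exact h2
  obtain ⟨n₁, hn₁⟩ := (hL.eventually (Iio_mem_nhds hε)).exists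
  obtain ⟨n₂, hn₂⟩ := (hR.eventually (Iio_mem_nhds hε)).exists
  have hδ1 : (0:ℝ) < 1/(n₁+1) := by positivity
  have hδ2 : (0:ℝ) < 1/(n₂+1) := by positivity
  set δ := min (1/((n₁:ℝ)+1)) (1/((n₂:ℝ)+1)) with hδdef
  have hδ : (0:ℝ) < δ := lt_min hδ1 hδ2
  filter_upwards [Metric.ball_mem_nhds x hδ] with y hy
  rw [Metric.mem_ball, Real.dist_eq, abs_sub_lt_iff] at hy
  constructor
  · -- ν (Ioi x) - ε ≤ ν (Ioi y)
    rcases le_or_gt y x with h | h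
    · exact le_trans tsub_le_self (measure_mono (Set.Ioi_subset_Ioi h))
    · rw [tsub_le_iff_right]
      have hsub : Set.Ioi x ⊆ Set.Ioi y ∪ Set.Ioc x y := by
        intro z hz
        rcases le_or_gt z y with h' | h'
        · exact Or.inr ⟨hz, h'⟩
        · exact Or.inl h'
      calc ν (Set.Ioi x) ≤ ν (Set.Ioi y) + ν (Set.Ioc x y) :=
            le_trans (measure_mono hsub) (measure_union_le _ _)
        _ ≤ ν (Set.Ioi y) + ε := by
            gcongr
            refine le_of_lt (lt_of_le_of_lt (measure_mono ?_) hn₂)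
            apply Set.Ioc_subset_Ioc le_rfl
            have : y - x < δ := hy.1
            have : δ ≤ 1/((n₂:ℝ)+1) := min_le_right _ _
            linarith
  · -- ν (Ioi y) ≤ ν (Ioi x) + ε
    rcases le_or_gt x y with h | h
    · exact le_trans (measure_mono (Set.Ioi_subset_Ioi h)) le_self_add
    · have hsub : Set.Ioi y ⊆ Set.Ioi x ∪ Set.Ioc y x := by
        intro z hz
        rcases le_or_gt z x with h' | h'
        · exact Or.inr ⟨hz, h'⟩
        · exact Or.inl h'
      calc ν (Set.Ioi y) ≤ ν (Set.Ioi x) + ν (Set.Ioc y x) :=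
            le_trans (measure_mono hsub) (measure_union_le _ _)
        _ ≤ ν (Set.Ioi x) + ε := by
            gcongr
            refine le_of_lt (lt_of_le_of_lt (measure_mono ?_) hn₁)
            apply Set.Ioc_subset_Ioc _ le_rfl
            have : x - y < δ := hy.2
            have : δ ≤ 1/((n₁:ℝ)+1) := min_le_left _ _
            linarith
  
lemma exists_quantile (ν : Measure ℝ) [IsFiniteMeasure ν] (hatom : ∀ c : ℝ, ν {c} = 0)
    (m : ℝ≥0∞) (h0 : m ≤ ν (Set.Ici 0)) (h1 : ν (Set.Ioi 1) ≤ m) :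
    ∃ u ∈ Set.Icc (0:ℝ) 1, ν (Set.Ioi u) = m := by
  have hc := continuous_measure_Ioi ν hatom
  have h0' : m ≤ ν (Set.Ioi 0) := by
    rwa [measure_congr (Ioi_ae_eq_Ici' (hatom 0))]
  obtain ⟨u, hu, hum⟩ := intermediate_value_Icc' (zero_le_one (α := ℝ)) hc.continuousOn
    (⟨h1, h0'⟩ : m ∈ Set.Icc _ _)
  exact ⟨u, hu, hum⟩


/-- Theorem 3.7 of the paper, two-group form.
`p` is the fair probability, `S` the biased score, on `X × A` with `A = Fin 2`
a binary sensitive attribute.  The Affirmative Action assumption (every fair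
threshold decision agrees `μ`-a.e. with a group-wise threshold decision on `S`)
holds if and only if, within each group `a`, for `(μ_a ⊗ μ_a)`-almost every pair
of individuals, `p`-order implies `S`-order. -/
theorem affirmative_action_iff_groupwise_comonotone
    {X : Type*} [MeasurableSpace X]
    (μ : Measure (X × Fin 2)) [IsProbabilityMeasure μ]
    (p S : X × Fin 2 → ℝ) (hp : Measurable p) (hS : Measurable S)
    (hp01 : ∀ z, p z ∈ Set.Icc (0 : ℝ) 1) (hS01 : ∀ z, S z ∈ Set.Icc (0 : ℝ) 1)
    (hpos : ∀ a : Fin 2, 0 < μ {z | z.2 = a})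
    (hpAtomless : ∀ a : Fin 2, ∀ c : ℝ, (μ.restrict {z | z.2 = a}).map p {c} = 0)
    (hSAtomless : ∀ a : Fin 2, ∀ c : ℝ, (μ.restrict {z | z.2 = a}).map S {c} = 0) :
    (∀ t ∈ Set.Icc (0 : ℝ) 1, ∃ t' : Fin 2 → ℝ,
        (∀ a : Fin 2, t' a ∈ Set.Icc (0 : ℝ) 1) ∧
        (fun z => if t < p z then (1 : ℝ) else 0) =ᵐ[μ]
          (fun z => if t' z.2 < S z then (1 : ℝ) else 0)) ↔
    (∀ a : Fin 2,
        ∀ᵐ q ∂((μ.restrict {z | z.2 = a}).prod (μ.restrict {z | z.2 = a})),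
          p q.1 ≤ p q.2 → S q.1 ≤ S q.2) := by
  have hsetmeas : ∀ a : Fin 2, MeasurableSet {z : X × Fin 2 | z.2 = a} := fun a =>
    measurable_snd (measurableSet_singleton a)
  constructor
  · -- AA → comonotone
    intro hAA a
    set μa := μ.restrict {z : X × Fin 2 | z.2 = a} with hμadef
    rw [ae_iff]
    have hDnull : (μa.prod μa) {q : (X × Fin 2) × (X × Fin 2) | p q.1 = p q.2} = 0 := by
      have hD : MeasurableSet {q : (X × Fin 2) × (X × Fin 2) | p q.1 = p q.2} :=
        measurableSet_eq_fun (hp.comp measurable_fst) (hp.comp measurable_snd)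
      rw [Measure.prod_apply hD]
      have hfib : ∀ x : X × Fin 2,
          μa (Prod.mk x ⁻¹' {q : (X × Fin 2) × (X × Fin 2) | p q.1 = p q.2}) = 0 := by
        intro x
        have hpre : Prod.mk x ⁻¹' {q : (X × Fin 2) × (X × Fin 2) | p q.1 = p q.2}
            = p ⁻¹' {p x} := by
          ext y; simp [eq_comm]
        rw [hpre, ← Measure.map_apply hp (measurableSet_singleton _)]
        exact hpAtomless a _
      simp only [hfib, lintegral_zero]
    have hUnull : (μa.prod μa)
        (⋃ ts : ℚ × ℚ, ({z : X × Fin 2 | p z < (ts.1 : ℝ) ∧ (ts.2 : ℝ) < S z} ×ˢ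
          {z : X × Fin 2 | (ts.1 : ℝ) < p z ∧ S z < (ts.2 : ℝ)})) = 0 := by
      refine measure_iUnion_null fun ts => ?_
      obtain ⟨t, s⟩ := ts
      rw [Measure.prod_prod]
      by_contra hne
      obtain ⟨h1ne, h2ne⟩ := mul_ne_zero_iff.1 hne
      obtain ⟨z₁₀, hz₁₀⟩ := nonempty_of_measure_ne_zero h1ne
      obtain ⟨z₂₀, hz₂₀⟩ := nonempty_of_measure_ne_zero h2ne
      have ht0 : (0:ℝ) ≤ t := le_of_lt (lt_of_le_of_lt (hp01 z₁₀).1 hz₁₀.1)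
      have ht1 : (t:ℝ) ≤ 1 := le_of_lt (lt_of_lt_of_le hz₂₀.1 (hp01 z₂₀).2)
      obtain ⟨t', ht'mem, ht'ae⟩ := hAA t ⟨ht0, ht1⟩
      set N := {z : X × Fin 2 | ¬ ((fun z => if (t:ℝ) < p z then (1:ℝ) else 0) z
          = (fun z => if t' z.2 < S z then (1:ℝ) else 0) z)} with hNdef
      have hNnull : μ N = 0 := ht'ae
      have hbadnull : μa (N ∪ {z : X × Fin 2 | z.2 ≠ a}) = 0 := by
        refine measure_union_null ?_ ?_
        · rw [hμadef, Measure.restrict_apply' (hsetmeas a)]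
          exact measure_mono_null Set.inter_subset_left hNnull
        · rw [hμadef, Measure.restrict_apply' (hsetmeas a)]
          have : {z : X × Fin 2 | z.2 ≠ a} ∩ {z : X × Fin 2 | z.2 = a} = ∅ := by
            ext z; simp
          simp [this]
      have hget : ∀ (E : Set (X × Fin 2)), μa E ≠ 0 → ∃ z ∈ E, z.2 = a ∧
          (if (t:ℝ) < p z then (1:ℝ) else 0) = (if t' z.2 < S z then (1:ℝ) else 0) := by
        intro E hE
        have : μa (E \ (N ∪ {z : X × Fin 2 | z.2 ≠ a})) ≠ 0 := by
          intro h0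
          apply hE
          have := measure_union_le (μ := μa) (E \ (N ∪ {z : X × Fin 2 | z.2 ≠ a}))
            (N ∪ {z : X × Fin 2 | z.2 ≠ a})
          rw [h0, hbadnull] at this
          exact le_antisymm (le_trans (measure_mono (by intro z hz; by_cases h : z ∈ N ∪ {z : X × Fin 2 | z.2 ≠ a}; exact Or.inr h; exact Or.inl ⟨hz, h⟩)) (le_trans this (by simp))) (zero_le)
        obtain ⟨z, hz⟩ := nonempty_of_measure_ne_zero this
        refine ⟨z, hz.1, ?_, ?_⟩
        · by_contra h
          exact hz.2 (Or.inr h)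
        · by_contra h
          exact hz.2 (Or.inl h)
      obtain ⟨z₁, hz₁E, hz₁a, hz₁eq⟩ := hget _ h1ne
      obtain ⟨z₂, hz₂E, hz₂a, hz₂eq⟩ := hget _ h2ne
      rw [if_neg (not_lt.2 (le_of_lt hz₁E.1)), hz₁a] at hz₁eq
      rw [if_pos hz₂E.1, hz₂a] at hz₂eq
      have h₁ : ¬ (t' a < S z₁) := by
        intro h
        rw [if_pos h] at hz₁eq
        norm_num at hz₁eq
      have h₂ : t' a < S z₂ := by
        by_contra h
        rw [if_neg h] at hz₂eq
        norm_num at hz₂eq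
      have := hz₁E.2
      have := hz₂E.2
      rw [not_lt] at h₁
      linarith
    refine measure_mono_null ?_ (measure_union_null hDnull hUnull)
    intro q hq
    simp only [Set.mem_setOf_eq, Classical.not_imp] at hq
    obtain ⟨hple, hSgt⟩ := hq
    rcases eq_or_lt_of_le hple with heq | hlt
    · exact Or.inl heq
    · right
      obtain ⟨t, ht1, ht2⟩ := exists_rat_btwn hlt
      obtain ⟨s, hs1, hs2⟩ := exists_rat_btwn (not_le.1 hSgt)
      exact Set.mem_iUnion.2 ⟨(t, s), ⟨⟨ht1, hs2⟩, ⟨ht2, hs1⟩⟩⟩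
  · intro hmono t ht
    have hstep : ∀ a : Fin 2, ∃ u ∈ Set.Icc (0:ℝ) 1,
        (fun z => if t < p z then (1:ℝ) else 0) =ᵐ[μ.restrict {z : X × Fin 2 | z.2 = a}]
          (fun z => if u < S z then (1:ℝ) else 0) := by
      intro a
      set μa := μ.restrict {z : X × Fin 2 | z.2 = a} with hμadef
      set ν := μa.map S with hνdef
      have hν_apply : ∀ u : ℝ, ν (Set.Ioi u) = μa {z : X × Fin 2 | u < S z} := fun u =>
        Measure.map_apply hS measurableSet_Ioi
      have hνfin : IsFiniteMeasure ν := by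
        constructor
        rw [hνdef, Measure.map_apply hS MeasurableSet.univ]
        exact measure_lt_top _ _
      set m := μa {z : X × Fin 2 | t < p z} with hmdef
      have h1 : ν (Set.Ioi 1) ≤ m := by
        rw [hν_apply]
        have hempty : {z : X × Fin 2 | (1:ℝ) < S z} = ∅ := by
          refine Set.eq_empty_iff_forall_notMem.2 fun z hz => ?_
          exact absurd (hS01 z).2 (not_le.2 hz)
        simp [hempty]
      have h0 : m ≤ ν (Set.Ici 0) := by
        rw [hνdef, Measure.map_apply hS measurableSet_Ici]
        exact measure_mono fun z _ => (hS01 z).1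
      obtain ⟨u, humem, hueq⟩ := exists_quantile ν (hSAtomless a) m h0 h1
      refine ⟨u, humem, ?_⟩
      set A := {z : X × Fin 2 | t < p z} with hAdef
      set B := {z : X × Fin 2 | u < S z} with hBdef
      have hA : MeasurableSet A := measurableSet_lt measurable_const hp
      have hB : MeasurableSet B := measurableSet_lt measurable_const hS
      have hABeq : μa A = μa B := by rw [← hν_apply, hueq]
      have hABdiff : μa (A \ B) = μa (B \ A) := by
        have h1' := measure_inter_add_diff (μ := μa) A hB
        have h2' := measure_inter_add_diff (μ := μa) B hA
        rw [Set.inter_comm] at h2'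
        have hsum : μa (A ∩ B) + μa (A \ B) = μa (A ∩ B) + μa (B \ A) := by
          rw [h1', h2', hABeq]
        exact (ENNReal.add_right_inj (measure_ne_top _ _)).1 hsum
      have hdiffnull : μa (A \ B) = 0 := by
        by_contra hne
        have hne' : μa (B \ A) ≠ 0 := by rw [← hABdiff]; exact hne
        have hprod : (μa.prod μa) ((B \ A) ×ˢ (A \ B)) = 0 := by
          refine measure_mono_null ?_ (ae_iff.1 (hmono a))
          rintro ⟨q1, q2⟩ ⟨hq1, hq2⟩
          simp only [Set.mem_setOf_eq, Classical.not_imp]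
          rw [Set.mem_diff] at hq1 hq2
          have hq1B : u < S q1 := hq1.1
          have hq1A : ¬ t < p q1 := hq1.2
          have hq2A : t < p q2 := hq2.1
          have hq2B : ¬ u < S q2 := hq2.2
          rw [not_lt] at hq1A hq2B
          exact ⟨le_trans hq1A (le_of_lt hq2A), not_le.2 (lt_of_le_of_lt hq2B hq1B)⟩
        rw [Measure.prod_prod] at hprod
        exact (mul_ne_zero hne' hne) hprod
      have hdiffnull' : μa (B \ A) = 0 := by rw [← hABdiff]; exact hdiffnull
      rw [Filter.eventuallyEq_iff_exists_mem]
      refine ⟨((A \ B) ∪ (B \ A))ᶜ, ?_, ?_⟩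
      · rw [mem_ae_iff, compl_compl]
        exact measure_union_null hdiffnull hdiffnull'
      · intro z hz
        rw [Set.mem_compl_iff, Set.mem_union] at hz
        push_neg at hz
        by_cases h1 : t < p z
        · by_cases h2 : u < S z
          · simp [h1, h2]
          · exact absurd ⟨h1, h2⟩ hz.1
        · by_cases h2 : u < S z
          · exact absurd ⟨h2, h1⟩ hz.2
          · simp [h1, h2]
    choose u humem huae using hstep
    refine ⟨u, humem, ?_⟩
    rw [Filter.EventuallyEq, ae_iff]
    set E := {z : X × Fin 2 | ¬ ((fun z => if t < p z then (1:ℝ) else 0) z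
        = (fun z => if u z.2 < S z then (1:ℝ) else 0) z)} with hEdef
    have hgroup : ∀ a : Fin 2, μ (E ∩ {z : X × Fin 2 | z.2 = a}) = 0 := by
      intro a
      have hnull := ae_iff.1 (huae a)
      rw [Measure.restrict_apply' (hsetmeas a)] at hnull
      refine measure_mono_null ?_ hnull
      rintro z ⟨hzE, hza⟩
      have hza' : z.2 = a := hza
      refine ⟨?_, hza⟩
      simp only [hEdef, Set.mem_setOf_eq, hza'] at hzE ⊢
      exact hzE
    have hcover : E ⊆ (E ∩ {z : X × Fin 2 | z.2 = 0}) ∪ (E ∩ {z : X × Fin 2 | z.2 = 1}) := by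
      intro z hz
      have h01 : z.2 = 0 ∨ z.2 = 1 := by omega
      rcases h01 with h | h
      · exact Or.inl ⟨hz, h⟩
      · exact Or.inr ⟨hz, h⟩
    exact measure_mono_null hcover (measure_union_null (hgroup 0) (hgroup 1))
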